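/- arXiv:1710.03506 — 2 statements merged into one kernel-verified Lean document; each statement's English description precedes it below -/
import Mathlib

section
/- Let $x_t$ be as above, and define $y_t=ac\int_0^t x_s^2\,\frac{e^{-q_-(t-s)}-e^{-q_+(t-s)}}{q_+-q_-}\,ds$. Then $y$ solves $y''+(b+c+d)y'+(b(c+d)-ac)y=ac\,x_t^2$ with $y_0=0$, $y_0'=0$, and $y_t\to \frac{\nu}{(1-\nu)^3}$ as $t\to\infty$, where $\nu=ac/(b(c+d))$. -/
open Real MeasureTheory Filter Topology intervalIntegral

lemma bvo_int_exp (q T t : ℝ) (hq : q ≠ 0) :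
    ∫ s in T..t, Real.exp (q * s) = (Real.exp (q * t) - Real.exp (q * T)) / q := by
  have h : ∀ s ∈ Set.uIcc T t, HasDerivAt (fun u => Real.exp (q * u) / q) (Real.exp (q * s)) s := by
    intro s _
    have h1 : HasDerivAt (fun u : ℝ => q * u) q s := by
      simpa using (hasDerivAt_id s).const_mul q
    have := (h1.exp).div_const q
    simpa [mul_div_assoc, mul_comm, mul_div_cancel_right₀, hq] using this
  rw [intervalIntegral.integral_eq_sub_of_hasDerivAt h
    ((Real.continuous_exp.comp (continuous_const.mul continuous_id)).intervalIntegrable _ _)]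
  ring

lemma bvo_exp_neg_tendsto (q : ℝ) (hq : 0 < q) :
    Tendsto (fun t => Real.exp (-q * t)) atTop (𝓝 0) := by
  have h1 : Tendsto (fun t : ℝ => q * t) atTop atTop := tendsto_id.const_mul_atTop hq
  exact Tendsto.congr (fun t => by simp [neg_mul]) (Real.tendsto_exp_neg_atTop_nhds_zero.comp h1)

lemma bvo_conv_zero (q : ℝ) (hq : 0 < q) (g : ℝ → ℝ) (hg : Continuous g)
    (h0 : Tendsto g atTop (𝓝 0)) :
    Tendsto (fun t => Real.exp (-q * t) * ∫ s in (0:ℝ)..t, g s * Real.exp (q * s))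
      atTop (𝓝 0) := by
  have hexp : Continuous fun s : ℝ => Real.exp (q * s) := by fun_prop
  have hgint : ∀ A B : ℝ, IntervalIntegrable (fun s => g s * Real.exp (q * s)) volume A B :=
    fun A B => (hg.mul hexp).intervalIntegrable A B
  rw [Metric.tendsto_atTop]
  intro ε hε
  obtain ⟨N, hN⟩ := (Metric.tendsto_atTop.mp h0) (ε * q / 2) (by positivity)
  set T := max N 0 with hT
  have hT0 : (0:ℝ) ≤ T := le_max_right _ _
  set C := |∫ s in (0:ℝ)..T, g s * Real.exp (q * s)| with hC
  have h2 : Tendsto (fun t => C * Real.exp (-q * t)) atTop (𝓝 0) := by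
    simpa using (bvo_exp_neg_tendsto q hq).const_mul C
  obtain ⟨T2, hT2⟩ := (Metric.tendsto_atTop.mp h2) (ε / 2) (by positivity)
  refine ⟨max T T2, fun t ht => ?_⟩
  have htT : T ≤ t := le_trans (le_max_left _ _) ht
  have htT2 : T2 ≤ t := le_trans (le_max_right _ _) ht
  rw [Real.dist_0_eq_abs]
  have hsplit : (∫ s in (0:ℝ)..t, g s * Real.exp (q * s))
      = (∫ s in (0:ℝ)..T, g s * Real.exp (q * s)) + ∫ s in T..t, g s * Real.exp (q * s) :=
    (intervalIntegral.integral_add_adjacent_intervals (hgint 0 T) (hgint T t)).symm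
  have habs : |∫ s in T..t, g s * Real.exp (q * s)| ≤ ε / 2 * (Real.exp (q*t) - Real.exp (q*T)) := by
    calc |∫ s in T..t, g s * Real.exp (q * s)|
        ≤ ∫ s in T..t, |g s * Real.exp (q * s)| :=
          intervalIntegral.abs_integral_le_integral_abs htT
      _ ≤ ∫ s in T..t, ε * q / 2 * Real.exp (q * s) := by
          apply intervalIntegral.integral_mono_on htT
            ((hg.mul hexp).abs.intervalIntegrable T t)
            ((continuous_const.mul hexp).intervalIntegrable T t)
          intro s hs
          simp only [Pi.mul_apply]
          rw [abs_mul, abs_of_pos (Real.exp_pos _)]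
          have hb : |g s| ≤ ε * q / 2 := le_of_lt (by
            have := hN s (le_trans (le_max_left _ _) hs.1)
            rwa [Real.dist_0_eq_abs] at this)
          exact mul_le_mul_of_nonneg_right hb (Real.exp_pos _).le
      _ = ε / 2 * (Real.exp (q*t) - Real.exp (q*T)) := by
          rw [intervalIntegral.integral_const_mul, bvo_int_exp q T t (ne_of_gt hq)]
          field_simp
  have key : |Real.exp (-q * t) * ∫ s in (0:ℝ)..t, g s * Real.exp (q * s)|
      ≤ C * Real.exp (-q * t) + ε / 2 := by
    rw [hsplit, abs_mul, abs_of_pos (Real.exp_pos _)]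
    calc Real.exp (-q*t) * |(∫ s in (0:ℝ)..T, g s * Real.exp (q * s)) + ∫ s in T..t, g s * Real.exp (q * s)|
        ≤ Real.exp (-q*t) * (C + |∫ s in T..t, g s * Real.exp (q * s)|) :=
          mul_le_mul_of_nonneg_left (abs_add_le _ _) (Real.exp_pos _).le
      _ ≤ Real.exp (-q*t) * (C + ε / 2 * (Real.exp (q*t) - Real.exp (q*T))) := by
          gcongr
      _ ≤ Real.exp (-q*t) * (C + ε / 2 * Real.exp (q*t)) := by
          gcongr
          linarith [Real.exp_pos (q*T)]
      _ = C * Real.exp (-q*t) + ε / 2 := by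
          have hee : Real.exp (-q*t) * Real.exp (q*t) = 1 := by
            rw [← Real.exp_add]; ring_nf; exact Real.exp_zero
          linear_combination (ε/2) * hee
  have hfin : C * Real.exp (-q * t) < ε / 2 := by
    have := hT2 t htT2
    rwa [Real.dist_0_eq_abs, abs_of_nonneg (by positivity)] at this
  calc |Real.exp (-q * t) * ∫ s in (0:ℝ)..t, g s * Real.exp (q * s)|
      ≤ C * Real.exp (-q * t) + ε / 2 := key
    _ < ε / 2 + ε / 2 := by linarith
    _ = ε := by ring

lemma bvo_conv (q L : ℝ) (hq : 0 < q) (f : ℝ → ℝ) (hf : Continuous f)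
    (hL : Tendsto f atTop (𝓝 L)) :
    Tendsto (fun t => Real.exp (-q * t) * ∫ s in (0:ℝ)..t, f s * Real.exp (q * s))
      atTop (𝓝 (L / q)) := by
  have hexp : Continuous fun s : ℝ => Real.exp (q * s) := by fun_prop
  have h1 := bvo_conv_zero q hq (fun s => f s - L) (hf.sub continuous_const)
    (by simpa using hL.sub_const L)
  have h2 : Tendsto (fun t => L / q * (1 - Real.exp (-q * t))) atTop (𝓝 (L / q)) := by
    have := ((bvo_exp_neg_tendsto q hq).const_sub 1).const_mul (L / q)
    simpa using this
  have h3 := h1.add h2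
  rw [zero_add] at h3
  refine Tendsto.congr (fun t => ?_) h3
  have hid : (∫ s in (0:ℝ)..t, (f s - L) * Real.exp (q * s))
      = (∫ s in (0:ℝ)..t, f s * Real.exp (q * s)) - L * ((Real.exp (q * t) - 1) / q) := by
    have : (∫ s in (0:ℝ)..t, (f s - L) * Real.exp (q * s))
        = (∫ s in (0:ℝ)..t, f s * Real.exp (q * s)) - ∫ s in (0:ℝ)..t, L * Real.exp (q * s) := by
      rw [← intervalIntegral.integral_sub (f := fun s => f s * Real.exp (q * s))
        (g := fun s => L * Real.exp (q * s)) ((hf.mul hexp).intervalIntegrable 0 t)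
        ((continuous_const.mul hexp).intervalIntegrable 0 t)]
      congr 1; ext s; ring
    rw [this, intervalIntegral.integral_const_mul, bvo_int_exp q 0 t (ne_of_gt hq)]
    simp
  rw [hid]
  have hee : Real.exp (-q * t) * Real.exp (q * t) = 1 := by
    rw [← Real.exp_add]; ring_nf; exact Real.exp_zero
  linear_combination (-(L / q)) * hee

theorem branching_variance_ode (a b c d qm qp : ℝ) (ha : 0 ≤ a) (hb : 0 < b) (hc : 0 < c)
    (hd : 0 ≤ d) (hstab : a * c < b * (c + d))
    (hqm : qm ^ 2 - (b + c + d) * qm + (b * (c + d) - a * c) = 0)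
    (hqp : qp ^ 2 - (b + c + d) * qp + (b * (c + d) - a * c) = 0)
    (hqmpos : 0 < qm) (hqppos : 0 < qp) (hlt : qm < qp) :
    let x : ℝ → ℝ := fun t => 1 + a * c *
      ∫ s in (0:ℝ)..t, (Real.exp (-qm * s) - Real.exp (-qp * s)) / (qp - qm)
    let y : ℝ → ℝ := fun t => a * c *
      ∫ s in (0:ℝ)..t, x s ^ 2 *
        ((Real.exp (-qm * (t - s)) - Real.exp (-qp * (t - s))) / (qp - qm))
    let y1 : ℝ → ℝ := fun t => a * c *
      ∫ s in (0:ℝ)..t, x s ^ 2 *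
        ((-qm * Real.exp (-qm * (t - s)) + qp * Real.exp (-qp * (t - s))) / (qp - qm))
    y 0 = 0 ∧ y1 0 = 0 ∧
    (∀ t, HasDerivAt y (y1 t) t) ∧
    (∀ t, HasDerivAt y1 (a * c * x t ^ 2 - (b + c + d) * y1 t - (b * (c + d) - a * c) * y t) t) ∧
    Tendsto y atTop (𝓝 ((a * c / (b * (c + d))) / (1 - a * c / (b * (c + d))) ^ 3)) := by
  intro x y y1
  have hdpos : 0 < qp - qm := sub_pos.mpr hlt
  have hd0 : qp - qm ≠ 0 := ne_of_gt hdpos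
  have hqm0 : qm ≠ 0 := ne_of_gt hqmpos
  have hqp0 : qp ≠ 0 := ne_of_gt hqppos
  have hsum : qm + qp = b + c + d := by
    have h : (qp - qm) * (qm + qp - (b + c + d)) = 0 := by linear_combination hqp - hqm
    rcases mul_eq_zero.mp h with h' | h'
    · exact absurd h' hd0
    · linarith
  have hprod : qm * qp = b * (c + d) - a * c := by
    linear_combination qm * hsum - hqm
  -- closed form of x
  have hxfun : x = fun t => 1 + a * c *
      (((1 - Real.exp (-qm * t)) / qm - (1 - Real.exp (-qp * t)) / qp) / (qp - qm)) := by
    funext t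
    show 1 + a * c * ∫ s in (0:ℝ)..t, (Real.exp (-qm * s) - Real.exp (-qp * s)) / (qp - qm) = _
    have i1 : IntervalIntegrable (fun s => Real.exp (-qm * s)) volume 0 t :=
      (by fun_prop : Continuous fun s : ℝ => Real.exp (-qm * s)).intervalIntegrable 0 t
    have i2 : IntervalIntegrable (fun s => Real.exp (-qp * s)) volume 0 t :=
      (by fun_prop : Continuous fun s : ℝ => Real.exp (-qp * s)).intervalIntegrable 0 t
    rw [intervalIntegral.integral_div, intervalIntegral.integral_sub i1 i2,
      bvo_int_exp (-qm) 0 t (neg_ne_zero.mpr hqm0), bvo_int_exp (-qp) 0 t (neg_ne_zero.mpr hqp0)]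
    simp only [mul_zero, Real.exp_zero]
    ring
  have hxc : Continuous x := by rw [hxfun]; fun_prop
  set Lx : ℝ := 1 + a * c * ((1 / qm - 1 / qp) / (qp - qm)) with hLxdef
  have hxlim : Tendsto x atTop (𝓝 Lx) := by
    rw [hxfun, hLxdef]
    have e1 := bvo_exp_neg_tendsto qm hqmpos
    have e2 := bvo_exp_neg_tendsto qp hqppos
    have := ((((e1.const_sub 1).div_const qm).sub
      ((e2.const_sub 1).div_const qp)).div_const (qp - qm)).const_mul (a * c) |>.const_add 1
    simpa [one_div] using this
  -- abbreviation for the primitive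
  have hint : ∀ (q A B : ℝ), IntervalIntegrable (fun s => x s ^ 2 * Real.exp (q * s)) volume A B :=
    fun q A B => ((hxc.pow 2).mul (by fun_prop)).intervalIntegrable A B
  set G : ℝ → ℝ → ℝ := fun q t => ∫ s in (0:ℝ)..t, x s ^ 2 * Real.exp (q * s) with hGdef
  have hy : ∀ t, y t = a * c / (qp - qm) *
      (Real.exp (-qm * t) * G qm t - Real.exp (-qp * t) * G qp t) := by
    intro t
    show a * c * ∫ s in (0:ℝ)..t, x s ^ 2 *
        ((Real.exp (-qm * (t - s)) - Real.exp (-qp * (t - s))) / (qp - qm)) = _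
    have hcongr : Set.EqOn (fun s => x s ^ 2 *
        ((Real.exp (-qm * (t - s)) - Real.exp (-qp * (t - s))) / (qp - qm)))
        (fun s => (Real.exp (-qm * t) / (qp - qm)) * (x s ^ 2 * Real.exp (qm * s))
          - (Real.exp (-qp * t) / (qp - qm)) * (x s ^ 2 * Real.exp (qp * s)))
        (Set.uIcc 0 t) := by
      intro s _
      simp only
      rw [show -qm * (t - s) = -qm * t + qm * s by ring,
        show -qp * (t - s) = -qp * t + qp * s by ring, Real.exp_add, Real.exp_add]
      ring
    rw [intervalIntegral.integral_congr hcongr,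
      intervalIntegral.integral_sub (((hint qm 0 t).const_mul _)) (((hint qp 0 t).const_mul _)),
      intervalIntegral.integral_const_mul, intervalIntegral.integral_const_mul]
    show a * c * (_ * G qm t - _ * G qp t) = _
    ring
  have hy1 : ∀ t, y1 t = a * c / (qp - qm) *
      (-qm * (Real.exp (-qm * t) * G qm t) + qp * (Real.exp (-qp * t) * G qp t)) := by
    intro t
    show a * c * ∫ s in (0:ℝ)..t, x s ^ 2 *
        ((-qm * Real.exp (-qm * (t - s)) + qp * Real.exp (-qp * (t - s))) / (qp - qm)) = _
    have hcongr : Set.EqOn (fun s => x s ^ 2 *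
        ((-qm * Real.exp (-qm * (t - s)) + qp * Real.exp (-qp * (t - s))) / (qp - qm)))
        (fun s => (-qm * Real.exp (-qm * t) / (qp - qm)) * (x s ^ 2 * Real.exp (qm * s))
          + (qp * Real.exp (-qp * t) / (qp - qm)) * (x s ^ 2 * Real.exp (qp * s)))
        (Set.uIcc 0 t) := by
      intro s _
      simp only
      rw [show -qm * (t - s) = -qm * t + qm * s by ring,
        show -qp * (t - s) = -qp * t + qp * s by ring, Real.exp_add, Real.exp_add]
      ring
    rw [intervalIntegral.integral_congr hcongr,
      intervalIntegral.integral_add (((hint qm 0 t).const_mul _)) (((hint qp 0 t).const_mul _)),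
      intervalIntegral.integral_const_mul, intervalIntegral.integral_const_mul]
    show a * c * (_ * G qm t + _ * G qp t) = _
    ring
  -- derivative of F q := fun u => exp(-q u) * G q u
  have hF : ∀ q t : ℝ, HasDerivAt (fun u => Real.exp (-q * u) * G q u)
      (x t ^ 2 - q * (Real.exp (-q * t) * G q t)) t := by
    intro q t
    have hG : HasDerivAt (G q) (x t ^ 2 * Real.exp (q * t)) t :=
      (((hxc.pow 2).mul (by fun_prop)).integral_hasStrictDerivAt 0 t).hasDerivAt
    have hE : HasDerivAt (fun u : ℝ => Real.exp (-q * u)) (-q * Real.exp (-q * t)) t := by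
      have h1 : HasDerivAt (fun u : ℝ => -q * u) (-q) t := by
        simpa using (hasDerivAt_id t).const_mul (-q)
      simpa [mul_comm] using h1.exp
    have := hE.mul hG
    refine this.congr_deriv (Eq.symm ?_)
    have hee : Real.exp (-q * t) * Real.exp (q * t) = 1 := by
      rw [← Real.exp_add]; ring_nf; exact Real.exp_zero
    linear_combination (-(x t ^ 2)) * hee
  have hyfun : y = fun t => a * c / (qp - qm) *
      (Real.exp (-qm * t) * G qm t - Real.exp (-qp * t) * G qp t) := funext hy
  have hy1fun : y1 = fun t => a * c / (qp - qm) *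
      (-qm * (Real.exp (-qm * t) * G qm t) + qp * (Real.exp (-qp * t) * G qp t)) := funext hy1
  refine ⟨?_, ?_, ?_, ?_, ?_⟩
  · show a * c * ∫ s in (0:ℝ)..(0:ℝ), _ = 0
    rw [intervalIntegral.integral_same, mul_zero]
  · show a * c * ∫ s in (0:ℝ)..(0:ℝ), _ = 0
    rw [intervalIntegral.integral_same, mul_zero]
  · intro t
    rw [hyfun, hy1 t]
    have := ((hF qm t).sub (hF qp t)).const_mul (a * c / (qp - qm))
    refine this.congr_deriv (Eq.symm ?_)
    ring
  · intro t
    rw [hy t, hy1 t, hy1fun]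
    have := (((hF qm t).const_mul (-qm)).add ((hF qp t).const_mul qp)).const_mul (a * c / (qp - qm))
    refine this.congr_deriv (Eq.symm ?_)
    rw [← hsum, ← hprod]
    field_simp
    ring
  · rw [hyfun]
    have h1 := bvo_conv qm (Lx ^ 2) hqmpos (fun s => x s ^ 2) (hxc.pow 2) (hxlim.pow 2)
    have h2 := bvo_conv qp (Lx ^ 2) hqppos (fun s => x s ^ 2) (hxc.pow 2) (hxlim.pow 2)
    have h3 := (h1.sub h2).const_mul (a * c / (qp - qm))
    have hfin : a * c / (qp - qm) * (Lx ^ 2 / qm - Lx ^ 2 / qp)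
        = (a * c / (b * (c + d))) / (1 - a * c / (b * (c + d))) ^ 3 := by
      have hLx : Lx = (qm * qp + a * c) / (qm * qp) := by
        rw [hLxdef]
        field_simp
      have h5 : a * c / (qp - qm) * (Lx ^ 2 / qm - Lx ^ 2 / qp) = a * c * Lx ^ 2 / (qm * qp) := by
        field_simp
      rw [h5, hLx, hprod]
      have hP : (0:ℝ) < b * (c + d) := by positivity
      have hK : (0:ℝ) < b * (c + d) - a * c := by linarith
      field_simp
      ring
    rw [← hfin]
    exact h3
end

section
/- Let $0<\nu<1$, $\theta_0=-\ln\nu+\nu-1$, and suppose $V_u(\theta)\le -\ln\nu$ for all $u\ge 0$ and $\theta\le\theta_0$. Then for $\theta\le\theta_0$, $\ln\mathbb{E}[e^{\theta N_t}]=\frac{\lambda_0 c}{c+d}\int_0^t(e^{V_u(\theta)}-1)(1-e^{-(c+d)(t-u)})du \le \frac{\lambda_0 c}{(c+d)^2}\cdot\frac{1-\nu}{\nu}\cdot\big((c+d)t-1+e^{-(c+d)t}\big)$. -/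
open Real MeasureTheory

theorem cluster_mgf_bound (lam0 c d ν : ℝ) (hlam0 : 0 < lam0) (hc : 0 < c) (hd : 0 ≤ d)
    (h0 : 0 < ν) (h1 : ν < 1) (V : ℝ → ℝ → ℝ)
    (hVcont : ∀ θ, Continuous fun u => V u θ)
    (hbound : ∀ u ≥ 0, ∀ θ ≤ -Real.log ν + ν - 1, V u θ ≤ -Real.log ν) :
    ∀ θ ≤ -Real.log ν + ν - 1, ∀ t ≥ 0,
      lam0 * c / (c + d) *
        ∫ u in (0:ℝ)..t, (Real.exp (V u θ) - 1) * (1 - Real.exp (-(c + d) * (t - u))) ≤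
      lam0 * c / (c + d) ^ 2 * ((1 - ν) / ν) *
        ((c + d) * t - 1 + Real.exp (-(c + d) * t)) := by
  intro θ hθ t ht
  set K := c + d with hKdef
  have hK : 0 < K := by positivity
  -- pointwise bound
  have hpt : ∀ u ∈ Set.Icc (0:ℝ) t,
      (Real.exp (V u θ) - 1) * (1 - Real.exp (-K * (t - u))) ≤
      ((1 - ν) / ν) * (1 - Real.exp (-K * (t - u))) := by
    intro u hu
    have hnn : 0 ≤ 1 - Real.exp (-K * (t - u)) := by
      have h2 : -K * (t - u) ≤ 0 := by nlinarith [hu.1, hu.2]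
      have := Real.exp_le_one_iff.mpr h2
      linarith
    have hV : Real.exp (V u θ) - 1 ≤ (1 - ν) / ν := by
      have h := hbound u hu.1 θ hθ
      have h2 : Real.exp (V u θ) ≤ Real.exp (-Real.log ν) := Real.exp_le_exp.mpr h
      rw [Real.exp_neg, Real.exp_log h0] at h2
      have h3 : (1 - ν) / ν + 1 = ν⁻¹ := by field_simp; ring
      linarith
    exact mul_le_mul_of_nonneg_right hV hnn
  have hcont2 : Continuous fun u => 1 - Real.exp (-K * (t - u)) :=
    continuous_const.sub ((continuous_const.mul (continuous_const.sub continuous_id)).rexp)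
  have hint1 : IntervalIntegrable
      (fun u => (Real.exp (V u θ) - 1) * (1 - Real.exp (-K * (t - u)))) volume 0 t :=
    (((hVcont θ).rexp.sub continuous_const).mul hcont2).intervalIntegrable _ _
  have hint2 : IntervalIntegrable
      (fun u => ((1 - ν) / ν) * (1 - Real.exp (-K * (t - u)))) volume 0 t :=
    (continuous_const.mul hcont2).intervalIntegrable _ _
  have hmono : (∫ u in (0:ℝ)..t, (Real.exp (V u θ) - 1) * (1 - Real.exp (-K * (t - u)))) ≤
      ∫ u in (0:ℝ)..t, ((1 - ν) / ν) * (1 - Real.exp (-K * (t - u))) :=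
    intervalIntegral.integral_mono_on ht hint1 hint2 hpt
  -- compute the integral of the bound
  have hexp : (∫ u in (0:ℝ)..t, Real.exp (K * u)) = (Real.exp (K * t) - 1) / K := by
    rw [intervalIntegral.integral_comp_mul_left (fun x => Real.exp x) hK.ne']
    simp [integral_exp, smul_eq_mul, div_eq_inv_mul]
  have hcomp : (∫ u in (0:ℝ)..t, (1 - Real.exp (-K * (t - u)))) =
      t - (1 - Real.exp (-K * t)) / K := by
    have heq : ∀ u : ℝ, Real.exp (-K * (t - u)) = Real.exp (-K * t) * Real.exp (K * u) := by
      intro u; rw [← Real.exp_add]; ring_nf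
    have hintexp : IntervalIntegrable (fun u => Real.exp (-K * (t - u))) volume 0 t :=
      ((continuous_const.mul (continuous_const.sub continuous_id)).rexp).intervalIntegrable _ _
    rw [intervalIntegral.integral_sub (intervalIntegrable_const) hintexp]
    simp_rw [heq]
    rw [intervalIntegral.integral_const_mul, hexp]
    rw [intervalIntegral.integral_const]
    field_simp
    ring_nf
    rw [← Real.exp_add]
    norm_num
    ring
  have hle : lam0 * c / K *
      (∫ u in (0:ℝ)..t, (Real.exp (V u θ) - 1) * (1 - Real.exp (-K * (t - u)))) ≤
      lam0 * c / K * (((1 - ν) / ν) * (t - (1 - Real.exp (-K * t)) / K)) := by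
    apply mul_le_mul_of_nonneg_left _ (by positivity)
    calc _ ≤ _ := hmono
    _ = ((1 - ν) / ν) * (t - (1 - Real.exp (-K * t)) / K) := by
        rw [intervalIntegral.integral_const_mul, hcomp]
  refine hle.trans (le_of_eq ?_)
  field_simp
  ring
end
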